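/- A connected graph G on n vertices is resistance regular (all row sums of its resistance distance matrix are equal) if and only if all diagonal entries of the Moore-Penrose inverse of its Laplacian are equal: L†_11 = L†_22 = ⋯ = L†_nn. -/

import Mathlib

open Matrix BigOperators Finset

noncomputable def allOnes (V : Type*) : Matrix V V ℝ := Matrix.of fun _ _ => 1

/-- The resistance distance matrix of a connected graph, via the matrix
`X = (L + (1/n)J)⁻¹`: `r_ij = X_ii + X_jj - 2X_ij`. -/
noncomputable def resistMatrix {V : Type*} [Fintype V] [DecidableEq V]
    (G : SimpleGraph V) [DecidableRel G.Adj] : Matrix V V ℝ :=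
  Matrix.of fun i j =>
    (G.lapMatrix ℝ + (Fintype.card V : ℝ)⁻¹ • allOnes V)⁻¹ i i +
    (G.lapMatrix ℝ + (Fintype.card V : ℝ)⁻¹ • allOnes V)⁻¹ j j -
    2 * (G.lapMatrix ℝ + (Fintype.card V : ℝ)⁻¹ • allOnes V)⁻¹ i j

/-- `W` is the Moore-Penrose inverse of `L`. -/
def IsMoorePenrose {V : Type*} [Fintype V] [DecidableEq V] (L W : Matrix V V ℝ) : Prop :=
  L * W * L = L ∧ W * L * W = W ∧ (L * W)ᵀ = L * W ∧ (W * L)ᵀ = W * L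

theorem resistanceRegular_iff_diag_moorePenrose_const
    {V : Type*} [Fintype V] [DecidableEq V] (G : SimpleGraph V) [DecidableRel G.Adj]
    (hG : G.Connected) (W : Matrix V V ℝ) (hW : IsMoorePenrose (G.lapMatrix ℝ) W) :
    (∀ i j : V, ∑ k, (W i i + W k k - 2 * W i k) = ∑ k, (W j j + W k k - 2 * W j k)) ↔
      (∀ i j : V, W i i = W j j) := by
  obtain ⟨h1, h2, h3, h4⟩ := hW
  have hLsymm : (G.lapMatrix ℝ)ᵀ = G.lapMatrix ℝ := G.isSymm_lapMatrix (R := ℝ)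
  -- W = W * Wᵀ * L
  have hWfac : W = W * Wᵀ * G.lapMatrix ℝ := by
    calc W = W * (G.lapMatrix ℝ * W) := by rw [← Matrix.mul_assoc, h2]
    _ = W * (G.lapMatrix ℝ * W)ᵀ := by rw [h3]
    _ = W * (Wᵀ * (G.lapMatrix ℝ)ᵀ) := by rw [Matrix.transpose_mul]
    _ = W * Wᵀ * G.lapMatrix ℝ := by rw [hLsymm, Matrix.mul_assoc]
  have hrow : ∀ i : V, ∑ k, W i k = 0 := by
    intro i
    have := congrArg (fun M : Matrix V V ℝ => (M *ᵥ (fun _ : V => (1 : ℝ))) i) hWfac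
    beta_reduce at this
    rw [← Matrix.mulVec_mulVec, ← Matrix.mulVec_mulVec,
      G.lapMatrix_mulVec_const_eq_zero, Matrix.mulVec_zero, Matrix.mulVec_zero] at this
    simpa [Matrix.mulVec, dotProduct] using this
  have hsum : ∀ i : V, ∑ k, (W i i + W k k - 2 * W i k)
      = (Fintype.card V : ℝ) * W i i + ∑ k, W k k := by
    intro i
    rw [Finset.sum_sub_distrib, Finset.sum_add_distrib, ← Finset.mul_sum, hrow,
      Finset.sum_const, Finset.card_univ, nsmul_eq_mul]
    ring
  have hn : (0 : ℝ) < (Fintype.card V : ℝ) := by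
    have : Nonempty V := hG.nonempty
    exact_mod_cast Fintype.card_pos
  constructor
  · intro h i j
    have := h i j
    rw [hsum i, hsum j] at this
    have := add_right_cancel this
    exact mul_left_cancel₀ hn.ne' this
  · intro h i j
    rw [hsum i, hsum j, h i j]
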